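/- Let M1, M2 be random variables with values in [0,1], set M_C := M1 · M2, let A1, A2 be events and e1, e2 ≥ 0. Assume: MCE(M1, A1) ≤ e1 and MCE(M2, A2) ≤ e2; and the conditional independences A1 ⟂ A2 | M_C, A1 ⟂ M_C | M1, and A2 ⟂ M_C | M2 hold. Then almost surely P(A1 ∩ A2 | σ(M_C)) ≥ max(0, M_C − e1) · max(0, M_C − e2). -/

import Mathlib

open MeasureTheory ProbabilityTheory
open scoped ENNReal

/-- The sigma-algebra generated by a random variable. -/
def sigGen {Ω α : Type*} [MeasurableSpace α] (M : Ω → α) : MeasurableSpace Ω :=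
  MeasurableSpace.comap M inferInstance

/-- Conditional probability of an event given a sub-sigma-algebra, as a random variable:
`P(A | 𝒢) = E[1_A | 𝒢]`. -/
noncomputable def cprob {Ω : Type*} [MeasurableSpace Ω] (μ : Measure Ω)
    (m : MeasurableSpace Ω) (A : Set Ω) : Ω → ℝ :=
  μ[A.indicator (fun _ => (1 : ℝ)) | m]



lemma key_conservatism {Ω : Type*} [MeasurableSpace Ω] (μ : Measure Ω) [IsProbabilityMeasure μ]
    (M MC : Ω → ℝ) (hM : Measurable M) (hMC : Measurable MC)
    (hMr : ∀ ω, M ω ∈ Set.Icc (0:ℝ) 1) (hMCr : ∀ ω, MC ω ∈ Set.Icc (0:ℝ) 1)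
    (hle : ∀ ω, MC ω ≤ M ω)
    (A : Set Ω) (hA : MeasurableSet A) (e : ℝ)
    (hMCE : ∀ᵐ ω ∂μ, |cprob μ (sigGen M) A ω - M ω| ≤ e)
    (hCI : cprob μ (sigGen (fun ω => (M ω, MC ω))) A =ᵐ[μ] cprob μ (sigGen M) A) :
    ∀ᵐ ω ∂μ, max 0 (MC ω - e) ≤ cprob μ (sigGen MC) A ω := by
  have hpair : Measurable (fun ω => (M ω, MC ω)) := hM.prodMk hMC
  have hm : sigGen MC ≤ ‹MeasurableSpace Ω› := hMC.comap_le
  have hmle : sigGen MC ≤ sigGen (fun ω => (M ω, MC ω)) := by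
    rintro s ⟨t, ht, rfl⟩
    exact ⟨Set.univ ×ˢ t, MeasurableSet.univ.prod ht, by ext ω; simp⟩
  have hintM : Integrable M μ := by
    refine ⟨hM.aestronglyMeasurable, ?_⟩
    refine HasFiniteIntegral.of_bounded (C := 1) (ae_of_all _ fun ω => ?_)
    rw [Real.norm_eq_abs, abs_le]
    exact ⟨by linarith [(hMr ω).1], (hMr ω).2⟩
  have hintMC : Integrable MC μ := by
    refine ⟨hMC.aestronglyMeasurable, ?_⟩
    refine HasFiniteIntegral.of_bounded (C := 1) (ae_of_all _ fun ω => ?_)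
    rw [Real.norm_eq_abs, abs_le]
    exact ⟨by linarith [(hMCr ω).1], (hMCr ω).2⟩
  -- tower
  have h1 : μ[cprob μ (sigGen (fun ω => (M ω, MC ω))) A | sigGen MC]
      =ᵐ[μ] cprob μ (sigGen MC) A :=
    by
      have hm2 : sigGen (fun ω => (M ω, MC ω)) ≤ ‹MeasurableSpace Ω› := hpair.comap_le
      exact condExp_condExp_of_le hmle hm2
  have h2 : μ[cprob μ (sigGen (fun ω => (M ω, MC ω))) A | sigGen MC]
      =ᵐ[μ] μ[cprob μ (sigGen M) A | sigGen MC] := condExp_congr_ae hCI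
  have hlb : (fun ω => M ω - e) ≤ᵐ[μ] cprob μ (sigGen M) A := by
    filter_upwards [hMCE] with ω h
    have := abs_le.mp h
    linarith [this.1]
  have h3 : μ[fun ω => M ω - e | sigGen MC] ≤ᵐ[μ] μ[cprob μ (sigGen M) A | sigGen MC] :=
    condExp_mono (hintM.sub (integrable_const e)) integrable_condExp hlb
  have h4 : μ[fun ω => M ω - e | sigGen MC]
      =ᵐ[μ] fun ω => (μ[M | sigGen MC]) ω - (μ[fun _ => e | sigGen MC]) ω :=
    condExp_sub hintM (integrable_const e) _
  have h5 : μ[fun _ : Ω => e | sigGen MC] = fun _ => e := condExp_const hm e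
  have h6 : μ[MC | sigGen MC] = MC :=
    condExp_of_stronglyMeasurable hm
      ((measurable_iff_comap_le.mpr le_rfl).stronglyMeasurable) hintMC
  have h7 : μ[MC | sigGen MC] ≤ᵐ[μ] μ[M | sigGen MC] :=
    condExp_mono hintMC hintM (ae_of_all _ hle)
  have hnn : 0 ≤ᵐ[μ] cprob μ (sigGen MC) A :=
    condExp_nonneg (ae_of_all _ fun ω => Set.indicator_nonneg (fun _ _ => zero_le_one) ω)
  filter_upwards [h1, h2, h3, h4, h7, hnn] with ω e1 e2 e3 e4 e6 e7
  have e5 : (μ[MC | sigGen MC]) ω = MC ω := by rw [h6]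
  have h5' : (μ[fun _ : Ω => e | sigGen MC]) ω = e := by rw [h5]
  have : MC ω - e ≤ cprob μ (sigGen MC) A ω := by linarith
  exact max_le e7 this

/-- Theorem 4.4 (Conservatism bound for product composition):
a.s. `P(A1 ∧ A2 | σ(M_C)) ≥ max(0, M_C − e1) · max(0, M_C − e2)`. -/
theorem conservatism_product_bound
    {Ω : Type*} [MeasurableSpace Ω] (μ : Measure Ω) [IsProbabilityMeasure μ]
    (M1 M2 MC : Ω → ℝ) (hM1 : Measurable M1) (hM2 : Measurable M2)
    (hM1r : ∀ ω, M1 ω ∈ Set.Icc (0 : ℝ) 1) (hM2r : ∀ ω, M2 ω ∈ Set.Icc (0 : ℝ) 1)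
    (hMCdef : MC = fun ω => M1 ω * M2 ω)
    (A1 A2 : Set Ω) (hA1 : MeasurableSet A1) (hA2 : MeasurableSet A2)
    (e1 e2 : ℝ) (he1 : 0 ≤ e1) (he2 : 0 ≤ e2)
    (hMCE1 : ∀ᵐ ω ∂μ, |cprob μ (sigGen M1) A1 ω - M1 ω| ≤ e1)
    (hMCE2 : ∀ᵐ ω ∂μ, |cprob μ (sigGen M2) A2 ω - M2 ω| ≤ e2)
    (hCIA : cprob μ (sigGen MC) (A1 ∩ A2) =ᵐ[μ]
      fun ω => cprob μ (sigGen MC) A1 ω * cprob μ (sigGen MC) A2 ω)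
    (hCI1 : cprob μ (sigGen (fun ω => (M1 ω, MC ω))) A1 =ᵐ[μ] cprob μ (sigGen M1) A1)
    (hCI2 : cprob μ (sigGen (fun ω => (M2 ω, MC ω))) A2 =ᵐ[μ] cprob μ (sigGen M2) A2) :
    ∀ᵐ ω ∂μ, max 0 (MC ω - e1) * max 0 (MC ω - e2) ≤ cprob μ (sigGen MC) (A1 ∩ A2) ω := by
  have hMC : Measurable MC := by rw [hMCdef]; exact hM1.mul hM2
  have hMCr : ∀ ω, MC ω ∈ Set.Icc (0:ℝ) 1 := by
    intro ω; rw [hMCdef]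
    exact ⟨mul_nonneg (hM1r ω).1 (hM2r ω).1,
      mul_le_one₀ (hM1r ω).2 (hM2r ω).1 (hM2r ω).2⟩
  have hle1 : ∀ ω, MC ω ≤ M1 ω := by
    intro ω; rw [hMCdef]; exact mul_le_of_le_one_right (hM1r ω).1 (hM2r ω).2
  have hle2 : ∀ ω, MC ω ≤ M2 ω := by
    intro ω; rw [hMCdef]; exact mul_le_of_le_one_left (hM2r ω).1 (hM1r ω).2
  have k1 := key_conservatism μ M1 MC hM1 hMC hM1r hMCr hle1 A1 hA1 e1 hMCE1 hCI1
  have k2 := key_conservatism μ M2 MC hM2 hMC hM2r hMCr hle2 A2 hA2 e2 hMCE2 hCI2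
  filter_upwards [k1, k2, hCIA] with ω h1 h2 hP
  rw [hP]
  exact mul_le_mul h1 h2 (le_max_left _ _) (le_trans (le_max_left _ _) h1)
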